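/- Let V = ℝ^{n+l} with W an l-dimensional subspace, where n + l = a + b. Suppose (A_1,B_1),...,(A_m,B_m) is a skew Bollobás system of subspaces where each A_i is of type (a, a_0) and each B_i is of type (b, b_0) with respect to W, and l ≤ min(a_0 + b, a + b_0). Then m ≤ ∑_{k=0}^{l-a_0-b_0} C(l, a_0+k) · C(a+b-l, a-a_0-k). -/

import Mathlib

open Module in
lemma exists_adapted_basis {M : Type*} [AddCommGroup M] [Module ℝ M] [FiniteDimensional ℝ M]
    (p : Submodule ℝ M) :
    ∃ v : Basis (Fin (finrank ℝ M)) ℝ M,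
      ∀ k : Fin (finrank ℝ M), (k : ℕ) < finrank ℝ p → (v k : M) ∈ p := by
  obtain ⟨q, hq⟩ := p.exists_isCompl
  have hd : finrank ℝ p + finrank ℝ q = finrank ℝ M := Submodule.finrank_add_eq_of_isCompl hq
  let b := (((finBasis ℝ p).prod (finBasis ℝ q)).map
    (Submodule.prodEquivOfIsCompl p q hq)).reindex (finSumFinEquiv.trans (finCongr hd))
  refine ⟨b, fun k hk => ?_⟩
  have h1 : (finSumFinEquiv.trans (finCongr hd)).symm k
      = Sum.inl (⟨(k : ℕ), hk⟩ : Fin (finrank ℝ p)) := by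
    apply (finSumFinEquiv.trans (finCongr hd)).injective
    simp [finSumFinEquiv_apply_left, Fin.ext_iff]
  simp only [b, Basis.reindex_apply, h1, Basis.map_apply, Basis.prod_apply]
  simp [Submodule.coe_prodEquivOfIsCompl']

open Finset in
lemma sum_pi_group {N a : ℕ} (g : (Fin a → Fin N) → ℝ)
    (hg : ∀ ρ, ¬Function.Injective ρ → g ρ = 0) :
    ∑ ρ : Fin a → Fin N, g ρ =
      ∑ S : {S : Finset (Fin N) // S.card = a}, ∑ σ : Equiv.Perm (Fin a),
        g (S.1.orderEmbOfFin S.2 ∘ σ) := by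
  classical
  have h1 : ∑ ρ : Fin a → Fin N, g ρ
      = ∑ ρ ∈ univ.filter (fun ρ : Fin a → Fin N => Function.Injective ρ), g ρ := by
    rw [sum_filter_of_ne]
    intro ρ _ h
    by_contra hni
    exact h (hg ρ hni)
  rw [h1, ← Fintype.sum_prod_type']
  refine (Finset.sum_bij (fun p _ => p.1.1.orderEmbOfFin p.1.2 ∘ p.2) ?_ ?_ ?_ ?_).symm
  · intro p _
    simp only [mem_filter, mem_univ, true_and]
    exact (p.1.1.orderEmbOfFin p.1.2).injective.comp p.2.injective
  · rintro ⟨S, σ⟩ _ ⟨S', σ'⟩ _ h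
    dsimp only at h
    have hS : S = S' := by
      have h2 := congrArg Set.range h
      rw [σ.surjective.range_comp, σ'.surjective.range_comp, Finset.range_orderEmbOfFin,
        Finset.range_orderEmbOfFin] at h2
      exact Subtype.ext (Finset.coe_injective h2)
    subst hS
    have hσ : σ = σ' :=
      Equiv.ext fun k => (S.1.orderEmbOfFin S.2).injective (congrFun h k)
    simp [hσ]
  · intro ρ hρ
    simp only [mem_filter, mem_univ, true_and] at hρ
    have hcard : (univ.image ρ).card = a := by
      rw [Finset.card_image_of_injective _ hρ, card_univ, Fintype.card_fin]
    have hmem : ∀ k, ρ k ∈ univ.image ρ := fun k => mem_image_of_mem ρ (mem_univ k)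
    set S : Finset (Fin N) := univ.image ρ with hSdef
    have hinj : Function.Injective (fun k =>
        (S.orderIsoOfFin hcard).symm ⟨ρ k, hmem k⟩) := by
      intro x y hxy
      exact hρ (Subtype.ext_iff.mp ((S.orderIsoOfFin hcard).symm.injective hxy))
    refine ⟨⟨⟨S, hcard⟩, Equiv.ofBijective _ (Finite.injective_iff_bijective.mp hinj)⟩,
      mem_univ _, ?_⟩
    funext k
    simp only [Function.comp_apply, Equiv.ofBijective_apply]
    rw [← Finset.coe_orderIsoOfFin_apply]
    simp
  · intros; rfl

lemma det_pairing_expansion {N a : ℕ} {Q : Type*} [AddCommGroup Q] [Module ℝ Q]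
    (bq : Module.Basis (Fin a) ℝ Q) (w : Fin N → Q) (F : Fin N → Fin a → ℝ) :
    bq.det (fun k => ∑ r, F r k • w r)
    = ∑ S : {S : Finset (Fin N) // S.card = a},
        (Matrix.det (Matrix.of fun k' k => F (S.1.orderEmbOfFin S.2 k') k))
        * bq.det (fun k => w (S.1.orderEmbOfFin S.2 k)) := by
  classical
  have h1 : bq.det (fun k => ∑ r, F r k • w r)
      = ∑ ρ : Fin a → Fin N, (∏ k, F (ρ k) k) • bq.det (fun k => w (ρ k)) := by
    have := bq.det.toMultilinearMap.map_sum (fun k r => F r k • w r)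
    simp only [AlternatingMap.coe_multilinearMap] at this
    rw [this]
    refine Finset.sum_congr rfl fun ρ _ => ?_
    exact bq.det.toMultilinearMap.map_smul_univ (fun k => F (ρ k) k) (fun k => w (ρ k))
  rw [h1, sum_pi_group]
  · refine Finset.sum_congr rfl fun S _ => ?_
    have inner : ∀ σ : Equiv.Perm (Fin a),
        (∏ k, F ((S.1.orderEmbOfFin S.2 ∘ σ) k) k)
          • bq.det (fun k => w ((S.1.orderEmbOfFin S.2 ∘ σ) k))
        = ((Equiv.Perm.sign σ : ℤ) * ∏ k, F (S.1.orderEmbOfFin S.2 (σ k)) k)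
          * bq.det (fun k => w (S.1.orderEmbOfFin S.2 k)) := by
      intro σ
      have hp : (fun k => w ((S.1.orderEmbOfFin S.2 ∘ σ) k))
          = (fun k => w (S.1.orderEmbOfFin S.2 k)) ∘ σ := rfl
      rw [hp, AlternatingMap.map_perm, Units.smul_def, zsmul_eq_mul]
      push_cast
      simp only [Function.comp_apply, smul_eq_mul]
      ring
    simp only [inner]
    rw [← Finset.sum_mul, Matrix.det_apply']
    simp only [Matrix.of_apply]
  · intro ρ hρ
    obtain ⟨x, y, hxy, hne⟩ := Function.not_injective_iff.mp hρ
    have : bq.det (fun k => w (ρ k)) = 0 :=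
      bq.det.map_eq_zero_of_eq _ (by rw [hxy]) hne
    rw [this, smul_zero]

open Module in
lemma not_li_of_finrank_lt {M : Type*} [AddCommGroup M] [Module ℝ M]
    {ι : Type*} [Fintype ι] {p : Submodule ℝ M} [FiniteDimensional ℝ p]
    (v : ι → M) (hv : ∀ k, v k ∈ p) (h : finrank ℝ p < Fintype.card ι) :
    ¬LinearIndependent ℝ v := by
  intro hli
  have hli' : LinearIndependent ℝ (fun k => (⟨v k, hv k⟩ : p)) :=
    LinearIndependent.of_comp p.subtype hli
  exact absurd hli'.fintype_card_le_finrank (by omega)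

lemma not_li_of_subfamily {M : Type*} [AddCommGroup M] [Module ℝ M]
    {ι : Type*} (P : ι → Prop) (v : ι → M)
    (h : ¬LinearIndependent ℝ (fun k : {k // P k} => v k.1)) :
    ¬LinearIndependent ℝ v := fun hli => h (hli.comp Subtype.val Subtype.val_injective)

lemma card_subtype_lt_fin {N c : ℕ} (h : c ≤ N) :
    Fintype.card {k : Fin N // (k : ℕ) < c} = c := by
  have := Fintype.card_congr
    (⟨fun k => ⟨(k.1 : ℕ), k.2⟩, fun k => ⟨⟨(k : ℕ), lt_of_lt_of_le k.2 h⟩, k.2⟩,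
     fun k => by ext; rfl, fun k => rfl⟩ : {k : Fin N // (k : ℕ) < c} ≃ Fin c)
  rw [this, Fintype.card_fin]

lemma card_subtype_ord {N a : ℕ} (S : Finset (Fin N)) (h : S.card = a)
    (P : Fin N → Prop) [DecidablePred P] :
    Fintype.card {k : Fin a // P (S.orderEmbOfFin h k)} = (S.filter P).card := by
  rw [← Fintype.card_coe]
  refine Fintype.card_congr (Equiv.ofBijective (fun k => ⟨S.orderEmbOfFin h k.1,
    Finset.mem_filter.mpr ⟨Finset.orderEmbOfFin_mem S h k.1, k.2⟩⟩) ⟨?_, ?_⟩)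
  · intro x y hxy
    have := Subtype.ext_iff.mp hxy
    exact Subtype.ext ((S.orderEmbOfFin h).injective (by simpa using this))
  · intro x
    have hx := Finset.mem_filter.mp x.2
    have hr : (x : Fin N) ∈ Set.range (S.orderEmbOfFin h) := by
      rw [Finset.range_orderEmbOfFin]; exact hx.1
    obtain ⟨k, hk⟩ := hr
    exact ⟨⟨k, by rw [hk]; exact hx.2⟩, Subtype.ext hk⟩

theorem singular_skew_bollobas_special (n l m a a₀ b b₀ : ℕ)
    (hnl : n + l = a + b)
    (W : Submodule ℝ (Fin (n + l) → ℝ)) (hW : Module.finrank ℝ ↥W = l)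
    (A B : Fin m → Submodule ℝ (Fin (n + l) → ℝ))
    (hA : ∀ i, Module.finrank ℝ ↥(A i) = a)
    (hAW : ∀ i, Module.finrank ℝ ↥(A i ⊓ W) = a₀)
    (hB : ∀ i, Module.finrank ℝ ↥(B i) = b)
    (hBW : ∀ i, Module.finrank ℝ ↥(B i ⊓ W) = b₀)
    (hdisj : ∀ i, A i ⊓ B i = ⊥)
    (hcross : ∀ i j : Fin m, i < j → A i ⊓ B j ≠ ⊥)
    (hl : l ≤ min (a₀ + b) (a + b₀)) :
    m ≤ ∑ k ∈ Finset.range (l - a₀ - b₀ + 1),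
      l.choose (a₀ + k) * (a + b - l).choose (a - a₀ - k) := by
  classical
  rcases Nat.eq_zero_or_pos m with hm | hm
  · omega
  have i₀ : Fin m := ⟨0, hm⟩
  have hfinV : Module.finrank ℝ (Fin (n + l) → ℝ) = n + l := by
    simp [Module.finrank_fintype_fun_eq_card]
  have hlab : l ≤ a₀ + b := le_trans hl (min_le_left _ _)
  have hlab' : l ≤ a + b₀ := le_trans hl (min_le_right _ _)
  have ha₀a : a₀ ≤ a := by
    rw [← hA i₀, ← hAW i₀]; exact Submodule.finrank_mono inf_le_left
  have hb₀b : b₀ ≤ b := by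
    rw [← hB i₀, ← hBW i₀]; exact Submodule.finrank_mono inf_le_left
  have ha₀l : a₀ ≤ l := by
    rw [← hW, ← hAW i₀]; exact Submodule.finrank_mono inf_le_right
  have hab : a₀ + b₀ ≤ l := by
    have h1 := Submodule.finrank_sup_add_finrank_inf_eq (A i₀ ⊓ W) (B i₀ ⊓ W)
    have h2 : (A i₀ ⊓ W) ⊓ (B i₀ ⊓ W) = ⊥ := by
      rw [← le_bot_iff, ← hdisj i₀]
      exact le_inf (le_trans inf_le_left inf_le_left) (le_trans inf_le_right inf_le_left)
    have h3 : Module.finrank ℝ ↥((A i₀ ⊓ W) ⊔ (B i₀ ⊓ W)) ≤ l :=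
      (Submodule.finrank_mono (sup_le inf_le_right inf_le_right)).trans_eq hW
    have e1 : Module.finrank ℝ ↥(A i₀ ⊓ W ⊓ (B i₀ ⊓ W)) = 0 := by
      rw [h2]; exact finrank_bot ℝ _
    rw [e1, hAW i₀, hBW i₀] at h1
    omega
  -- adapted basis of the ambient space
  obtain ⟨v₀, hv₀⟩ := exists_adapted_basis W
  set v : Module.Basis (Fin (n + l)) ℝ (Fin (n + l) → ℝ) := v₀.reindex (finCongr hfinV) with hvdef
  have hvW : ∀ r : Fin (n + l), (r : ℕ) < l → v r ∈ W := by
    intro r hr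
    rw [hvdef, Module.Basis.reindex_apply]
    exact hv₀ _ (by rw [hW]; simpa using hr)
  have hrepr0 : ∀ x ∈ W, ∀ r : Fin (n + l), ¬((r : ℕ) < l) → v.repr x r = 0 := by
    have hle : Submodule.span ℝ (⇑v '' {r : Fin (n + l) | (r : ℕ) < l}) ≤ W :=
      Submodule.span_le.mpr (by rintro _ ⟨r', hr', rfl⟩; exact hvW r' hr')
    have hli : LinearIndependent ℝ (fun r' : {r' : Fin (n + l) // (r' : ℕ) < l} => v r'.1) :=
      v.linearIndependent.comp _ Subtype.val_injective
    have hcard : Fintype.card {r' : Fin (n + l) // (r' : ℕ) < l} = l :=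
      card_subtype_lt_fin (by omega)
    have himg : ⇑v '' {r : Fin (n + l) | (r : ℕ) < l}
        = Set.range (fun r' : {r' : Fin (n + l) // (r' : ℕ) < l} => v r'.1) := by
      ext y
      simp [Set.mem_image, Set.mem_range, Subtype.exists]
    have hsp : Module.finrank ℝ
        (Submodule.span ℝ (⇑v '' {r : Fin (n + l) | (r : ℕ) < l})) = l := by
      rw [himg, finrank_span_eq_card hli, hcard]
    have hWeq : Submodule.span ℝ (⇑v '' {r : Fin (n + l) | (r : ℕ) < l}) = W := by
      apply Submodule.eq_of_le_of_finrank_le hle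
      rw [hW, hsp]
    intro x hx r hr
    have hsub := v.repr_support_subset_of_mem_span {r : Fin (n + l) | (r : ℕ) < l}
      (by rw [hWeq]; exact hx)
    by_contra h0
    exact hr (hsub (Finsupp.mem_support_iff.mpr h0))
  -- adapted spanning families of the A i
  have hu : ∀ i, ∃ u : Fin a → (Fin (n + l) → ℝ), LinearIndependent ℝ u ∧
      Submodule.span ℝ (Set.range u) = A i ∧ ∀ k : Fin a, (k : ℕ) < a₀ → u k ∈ W := by
    intro i
    obtain ⟨bu₀, hbu₀⟩ := exists_adapted_basis ((A i ⊓ W).comap (A i).subtype)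
    set bu := bu₀.reindex (finCongr (hA i)) with hbu
    refine ⟨fun k => ((bu k : A i) : Fin (n + l) → ℝ), ?_, ?_, ?_⟩
    · exact bu.linearIndependent.map' (A i).subtype (Submodule.ker_subtype _)
    · have h1 : Set.range (fun k => ((bu k : A i) : Fin (n + l) → ℝ))
          = (A i).subtype '' Set.range bu := (Set.range_comp _ _)
      rw [h1, Submodule.span_image, Module.Basis.span_eq, Submodule.map_subtype_top]
    · intro k hk
      have hfr : Module.finrank ℝ ((A i ⊓ W).comap (A i).subtype) = a₀ := by
        rw [LinearEquiv.finrank_eq (Submodule.comapSubtypeEquivOfLe inf_le_left), hAW i]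
      have hmem : (bu k : A i) ∈ (A i ⊓ W).comap (A i).subtype := by
        rw [hbu, Module.Basis.reindex_apply]
        apply hbu₀
        rw [hfr]
        simpa using hk
      exact (Submodule.mem_comap.mp hmem).2
  choose u hindep huspan huW using hu
  -- quotient bases
  have hQ : ∀ j, Module.finrank ℝ ((Fin (n + l) → ℝ) ⧸ B j) = a := by
    intro j
    have h1 := Submodule.finrank_quotient_add_finrank (B j)
    rw [hB j, hfinV] at h1; omega
  set bq : ∀ j, Module.Basis (Fin a) ℝ ((Fin (n + l) → ℝ) ⧸ B j) :=
    fun j => Module.finBasisOfFinrankEq ℝ _ (hQ j) with hbq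
  set F : Fin m → Fin (n + l) → Fin a → ℝ := fun i r k => v.repr (u i k) r with hF
  set d : Fin m → Fin m → ℝ :=
    fun i j => (bq j).det (fun k => (B j).mkQ (u i k)) with hd
  set φ : Fin m → {S : Finset (Fin (n + l)) // S.card = a} → ℝ := fun i S =>
    Matrix.det (Matrix.of fun k' k => F i (S.1.orderEmbOfFin S.2 k') k) with hφ
  set ψ : Fin m → {S : Finset (Fin (n + l)) // S.card = a} → ℝ := fun j S =>
    (bq j).det (fun k => (B j).mkQ (v (S.1.orderEmbOfFin S.2 k))) with hψ
  have hexp : ∀ i j, d i j = ∑ S : {S : Finset (Fin (n + l)) // S.card = a},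
      φ i S * ψ j S := by
    intro i j
    have hrw : (fun k => (B j).mkQ (u i k)) = fun k => ∑ r, F i r k • (B j).mkQ (v r) := by
      funext k
      conv_lhs => rw [← Module.Basis.sum_repr v (u i k)]
      rw [map_sum]
      simp [hF]
    simp only [hd, hφ, hψ]
    rw [hrw, det_pairing_expansion]
  have hdiag : ∀ j, d j j ≠ 0 := by
    intro j
    simp only [hd]
    have hli : LinearIndependent ℝ (⇑(B j).mkQ ∘ u j) := by
      apply (hindep j).map
      rw [Submodule.ker_mkQ, huspan j]
      exact disjoint_iff.mpr (hdisj j)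
    have htop : A j ⊔ B j = ⊤ := by
      apply Submodule.eq_top_of_finrank_eq
      have h1 := Submodule.finrank_sup_add_finrank_inf_eq (A j) (B j)
      have e1 : Module.finrank ℝ ↥(A j ⊓ B j) = 0 := by
        rw [hdisj j]; exact finrank_bot ℝ _
      rw [e1, hA j, hB j] at h1
      omega
    have hsp : Submodule.span ℝ (Set.range (⇑(B j).mkQ ∘ u j)) = ⊤ := by
      rw [Set.range_comp, Submodule.span_image, huspan j]
      have hBle : Submodule.map (B j).mkQ (B j) ≤ Submodule.map (B j).mkQ (A j) := by
        rw [Submodule.map_le_iff_le_comap]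
        intro x hx
        simp only [Submodule.mem_comap, Submodule.mkQ_apply]
        rw [Submodule.Quotient.mk_eq_zero (B j) |>.mpr hx]
        exact Submodule.zero_mem _
      have : Submodule.map (B j).mkQ (A j) = Submodule.map (B j).mkQ (A j ⊔ B j) := by
        rw [Submodule.map_sup]
        exact (sup_eq_left.mpr hBle).symm
      rw [this, htop, Submodule.map_top, Submodule.range_mkQ]
    exact IsUnit.ne_zero ((Module.Basis.is_basis_iff_det (bq j)).mp ⟨hli, hsp⟩)
  have htri : ∀ i j, i < j → d i j = 0 := by
    intro i j hij
    simp only [hd]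
    apply AlternatingMap.map_linearDependent
    intro hli
    obtain ⟨x, hx, hx0⟩ := Submodule.ne_bot_iff _ |>.mp (hcross i j hij)
    set f' := ((B j).mkQ).comp (A i).subtype with hf'
    have h1 : Submodule.span ℝ (Set.range fun k => (B j).mkQ (u i k))
        = LinearMap.range f' := by
      have : (fun k => (B j).mkQ (u i k)) = ⇑(B j).mkQ ∘ u i := rfl
      rw [this, Set.range_comp, Submodule.span_image, huspan i, hf',
        LinearMap.range_comp, Submodule.range_subtype]
    have hker : LinearMap.ker f' ≠ ⊥ := by
      intro hbot
      have hxin : (⟨x, (Submodule.mem_inf.mp hx).1⟩ : A i) ∈ LinearMap.ker f' := by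
        simp only [hf', LinearMap.mem_ker, LinearMap.comp_apply, Submodule.coe_subtype,
          Submodule.mkQ_apply]
        exact (Submodule.Quotient.mk_eq_zero (B j)).mpr (Submodule.mem_inf.mp hx).2
      rw [hbot, Submodule.mem_bot] at hxin
      exact hx0 (by simpa using hxin)
    have hker1 : 1 ≤ Module.finrank ℝ (LinearMap.ker f') := by
      by_contra hc
      push_neg at hc
      interval_cases h : Module.finrank ℝ (LinearMap.ker f')
      exact hker (Submodule.finrank_eq_zero.mp h)
    have hrn := LinearMap.finrank_range_add_finrank_ker f'
    rw [hA i] at hrn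
    have hsp := finrank_span_eq_card hli
    rw [h1, Fintype.card_fin] at hsp
    omega
  set tS : Finset (Fin (n + l)) → ℕ :=
    fun S => (S.filter (fun r : Fin (n + l) => (r : ℕ) < l)).card with htS
  have hφ0 : ∀ i S, tS S.1 < a₀ → φ i S = 0 := by
    intro i S hlt
    simp only [hφ]
    rw [← Matrix.det_transpose]
    show Matrix.detRowAlternating _ = 0
    apply AlternatingMap.map_linearDependent
    apply not_li_of_subfamily (fun k : Fin a => (k : ℕ) < a₀)
    refine not_li_of_finrank_lt
      (p := Submodule.span ℝ (Set.range
        (fun k'' : {k' : Fin a // ((S.1.orderEmbOfFin S.2 k' : Fin (n + l)) : ℕ) < l} =>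
          (Pi.single k''.1 1 : Fin a → ℝ)))) _ ?_ ?_
    · rintro ⟨k, hk⟩
      have hx : ∀ k', ¬(((S.1.orderEmbOfFin S.2 k' : Fin (n + l)) : ℕ) < l) →
          F i (S.1.orderEmbOfFin S.2 k') k = 0 := by
        intro k' h
        exact hrepr0 _ (huW i k hk) _ h
      have hxdef : ((Matrix.of fun k' k0 => F i (S.1.orderEmbOfFin S.2 k') k0).transpose k)
          = ∑ k' : Fin a, (F i (S.1.orderEmbOfFin S.2 k') k) • (Pi.single k' 1 : Fin a → ℝ) := by
        funext j0
        simp [Matrix.transpose_apply, Matrix.of_apply, Pi.single_apply, Finset.sum_apply,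
          mul_ite]
      show ((Matrix.of fun k' k0 => F i (S.1.orderEmbOfFin S.2 k') k0).transpose k) ∈ _
      rw [hxdef]
      apply Submodule.sum_mem
      intro k' _
      by_cases hk' : ((S.1.orderEmbOfFin S.2 k' : Fin (n + l)) : ℕ) < l
      · exact Submodule.smul_mem _ _ (Submodule.subset_span ⟨⟨k', hk'⟩, rfl⟩)
      · rw [hx k' hk', zero_smul]; exact Submodule.zero_mem _
    · have hcards := card_subtype_ord S.1 S.2 (fun r => (r : ℕ) < l)
      have hca := card_subtype_lt_fin (N := a) ha₀a
      have hteq : tS S.1 = (S.1.filter (fun r : Fin (n + l) => (r : ℕ) < l)).card := rfl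
      have hle : Module.finrank ℝ ↥(Submodule.span ℝ (Set.range
          (fun k'' : {k' : Fin a // ((S.1.orderEmbOfFin S.2 k' : Fin (n + l)) : ℕ) < l} =>
            (Pi.single k''.1 1 : Fin a → ℝ)))) ≤ (S.1.filter (fun r : Fin (n + l) => (r : ℕ) < l)).card := by
        rw [← hcards]
        exact finrank_range_le_card _
      rw [hca]
      omega
  have hψ0 : ∀ j S, l < tS S.1 + b₀ → ψ j S = 0 := by
    intro j S hlt
    simp only [hψ]
    apply AlternatingMap.map_linearDependent
    apply not_li_of_subfamily (fun k : Fin a => ((S.1.orderEmbOfFin S.2 k : Fin (n + l)) : ℕ) < l)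
    refine not_li_of_finrank_lt (p := Submodule.map (B j).mkQ W) _ ?_ ?_
    · rintro ⟨k, hk⟩
      exact Submodule.mem_map_of_mem (hvW _ hk)
    · set f'' := ((B j).mkQ).comp W.subtype with hf''
      have h1 : LinearMap.range f'' = Submodule.map (B j).mkQ W := by
        rw [hf'', LinearMap.range_comp, Submodule.range_subtype]
      have h2 : LinearMap.ker f'' = Submodule.comap W.subtype (B j ⊓ W) := by
        rw [hf'', LinearMap.ker_comp, Submodule.ker_mkQ]
        ext x
        simp only [Submodule.mem_comap, Submodule.mem_inf]
        exact ⟨fun h => ⟨h, x.2⟩, fun h => h.1⟩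
      have h3 : Module.finrank ℝ (LinearMap.ker f'') = b₀ := by
        rw [h2, LinearEquiv.finrank_eq (Submodule.comapSubtypeEquivOfLe inf_le_right), hBW j]
      have hrn := LinearMap.finrank_range_add_finrank_ker f''
      rw [h3, h1, hW] at hrn
      have hcards := card_subtype_ord S.1 S.2 (fun r => (r : ℕ) < l)
      have hteq : tS S.1 = (S.1.filter (fun r : Fin (n + l) => (r : ℕ) < l)).card := rfl
      rw [hcards]
      omega
  set P : {S : Finset (Fin (n + l)) // S.card = a} → Prop :=
    fun S => a₀ ≤ tS S.1 ∧ tS S.1 + b₀ ≤ l with hP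
  have hpair : ∀ i j, d i j = ∑ S : {S // P S}, φ i S.1 * ψ j S.1 := by
    intro i j
    rw [hexp i j]
    have hzero : ∀ S ∈ Finset.univ, S ∉ Finset.univ.filter P → φ i S * ψ j S = 0 := by
      intro S _ hS
      simp only [Finset.mem_filter, Finset.mem_univ, true_and, hP] at hS
      push_neg at hS
      rcases Nat.lt_or_ge (tS S.1) a₀ with h | h
      · rw [hφ0 i S h, zero_mul]
      · rw [hψ0 j S (by have := hS h; omega), mul_zero]
    rw [← Finset.sum_subset (Finset.filter_subset _ _) hzero]
    exact Finset.sum_subtype _ (fun S => by simp) _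
  set Φ : Fin m → ({S // P S} → ℝ) := fun i S => φ i S.1 with hΦ
  have hΦli : LinearIndependent ℝ Φ := by
    rw [Fintype.linearIndependent_iff]
    intro c hc
    have key : ∀ j, (∑ i, c i * d i j) = 0 := by
      intro j
      have h1 : ∑ i, c i * d i j = ∑ S : {S // P S}, (∑ i, c i * φ i S.1) * ψ j S.1 := by
        simp_rw [hpair, Finset.mul_sum]
        rw [Finset.sum_comm]
        refine Finset.sum_congr rfl fun S _ => ?_
        rw [Finset.sum_mul]
        exact Finset.sum_congr rfl fun i _ => by ring
      have h2 : ∀ S : {S // P S}, ∑ i, c i * φ i S.1 = 0 := by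
        intro S
        have h3 := congrFun hc S
        simpa [hΦ, Finset.sum_apply] using h3
      rw [h1]
      simp [h2]
    by_contra hne
    push_neg at hne
    obtain ⟨i1, hi1⟩ := hne
    set s : Finset (Fin m) := Finset.univ.filter (fun i => c i ≠ 0) with hs
    have hsn : s.Nonempty := ⟨i1, by simp [hs, hi1]⟩
    set j := s.max' hsn with hj
    have hcj : c j ≠ 0 := (Finset.mem_filter.mp (s.max'_mem hsn)).2
    have hkey := key j
    rw [Finset.sum_eq_single j] at hkey
    · rcases mul_eq_zero.mp hkey with h | h
      · exact hcj h
      · exact hdiag j h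
    · intro i _ hij
      rcases lt_or_gt_of_ne hij with h | h
      · rw [htri i j h, mul_zero]
      · have hni : i ∉ s := fun hin => absurd (Finset.le_max' s i hin) (not_le.mpr h)
        have : c i = 0 := by
          by_contra hci
          exact hni (Finset.mem_filter.mpr ⟨Finset.mem_univ _, hci⟩)
        rw [this, zero_mul]
    · intro h
      exact absurd (Finset.mem_univ j) h
  have hm1 : m ≤ Fintype.card {S // P S} := by
    have h1 := hΦli.fintype_card_le_finrank
    rwa [Module.finrank_fintype_fun_eq_card, Fintype.card_fin] at h1
  have hcount : Fintype.card {S // P S} ≤ ∑ k ∈ Finset.range (l - a₀ - b₀ + 1),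
      l.choose (a₀ + k) * (a + b - l).choose (a - a₀ - k) := by
    set K := l - a₀ - b₀ + 1 with hK
    set Rl : Finset (Fin (n + l)) := Finset.univ.filter (fun r : Fin (n + l) => (r : ℕ) < l)
      with hRl
    set Rn : Finset (Fin (n + l)) := Finset.univ.filter (fun r : Fin (n + l) => ¬(r : ℕ) < l)
      with hRn
    have hRlc : Rl.card = l := by
      rw [hRl, ← Fintype.card_subtype]
      exact card_subtype_lt_fin (by omega)
    have hRnc : Rn.card = n := by
      have h1 := Finset.card_filter_add_card_filter_not
        (s := (Finset.univ : Finset (Fin (n + l)))) (p := fun r : Fin (n + l) => (r : ℕ) < l)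
      rw [Finset.card_univ, Fintype.card_fin] at h1
      rw [hRn]
      rw [hRl] at hRlc
      omega
    set T : Finset ((_ : ℕ) × (Finset (Fin (n + l)) × Finset (Fin (n + l)))) :=
      (Finset.range K).sigma (fun k => (Rl.powersetCard (a₀ + k)) ×ˢ (Rn.powersetCard (a - a₀ - k)))
      with hT
    have hTcard : T.card = ∑ k ∈ Finset.range K,
        l.choose (a₀ + k) * (a + b - l).choose (a - a₀ - k) := by
      rw [hT, Finset.card_sigma]
      refine Finset.sum_congr rfl fun k _ => ?_
      rw [Finset.card_product, Finset.card_powersetCard, Finset.card_powersetCard, hRlc, hRnc]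
      congr 1
      congr 1
      omega
    rw [← hTcard]
    have hmap : ∀ S : {S // P S},
        (⟨(S.1.1.filter (fun r : Fin (n + l) => (r : ℕ) < l)).card - a₀, (S.1.1.filter (fun r : Fin (n + l) => (r : ℕ) < l),
          S.1.1.filter (fun r : Fin (n + l) => ¬(r : ℕ) < l))⟩ :
          (_ : ℕ) × (Finset (Fin (n + l)) × Finset (Fin (n + l)))) ∈ T := by
      rintro ⟨⟨S, hSc⟩, hSP⟩
      obtain ⟨hP1, hP2⟩ := hSP
      have hP1' : a₀ ≤ (S.filter (fun r : Fin (n + l) => (r : ℕ) < l)).card := hP1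
      have hP2' : (S.filter (fun r : Fin (n + l) => (r : ℕ) < l)).card + b₀ ≤ l := hP2
      have hsplit := Finset.card_filter_add_card_filter_not
        (s := S) (p := fun r : Fin (n + l) => (r : ℕ) < l)
      have htle : (S.filter (fun r : Fin (n + l) => (r : ℕ) < l)).card ≤ a := by
        rw [← hSc]; exact Finset.card_filter_le _ _
      dsimp only
      simp only [hT, Finset.mem_sigma, Finset.mem_range, Finset.mem_product,
        Finset.mem_powersetCard]
      refine ⟨by omega, ⟨?_, by omega⟩, ⟨?_, by omega⟩⟩
      · intro x hx
        rw [hRl, Finset.mem_filter]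
        exact ⟨Finset.mem_univ _, (Finset.mem_filter.mp hx).2⟩
      · intro x hx
        rw [hRn, Finset.mem_filter]
        exact ⟨Finset.mem_univ _, (Finset.mem_filter.mp hx).2⟩
    have hinj : Function.Injective (fun S : {S // P S} =>
        (⟨(⟨(S.1.1.filter (fun r : Fin (n + l) => (r : ℕ) < l)).card - a₀, (S.1.1.filter (fun r : Fin (n + l) => (r : ℕ) < l),
          S.1.1.filter (fun r : Fin (n + l) => ¬(r : ℕ) < l))⟩ :
          (_ : ℕ) × (Finset (Fin (n + l)) × Finset (Fin (n + l)))), hmap S⟩ : {x // x ∈ T})) := by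
      intro S S' hSS
      have h1 := Subtype.ext_iff.mp hSS
      simp only [Sigma.mk.inj_iff] at h1
      have h2' := eq_of_heq h1.2
      simp only [Prod.mk.injEq] at h2'
      have h2 : S.1.1 = S'.1.1 := by
        rw [← Finset.filter_union_filter_not_eq (fun r : Fin (n + l) => (r : ℕ) < l) S.1.1,
          ← Finset.filter_union_filter_not_eq (fun r : Fin (n + l) => (r : ℕ) < l) S'.1.1,
          h2'.1, h2'.2]
      exact Subtype.ext (Subtype.ext h2)
    have := Fintype.card_le_of_injective _ hinj
    rwa [Fintype.card_coe] at this
  omega
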